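/- For a proper ideal I of 𝕂̃ the following are equivalent: (1) I is pseudoprime; (2) the set of ideals of 𝕂̃ containing I is totally ordered by inclusion; (3) I is irreducible, i.e., for all ideals J, K of 𝕂̃, I = J ∩ K implies I = J or I = K; (4) for every S ⊆ (0,1), e_S ∈ I or e_{∁S} ∈ I; (5) the radical of I is a prime ideal. -/

import Mathlib

noncomputable section

set_option maxHeartbeats 1000000
set_option synthInstance.maxHeartbeats 400000

open scoped Classical

/-- The index set `(0,1) ⊆ ℝ` of the nets. -/
abbrev Eps : Type := Set.Ioo (0:ℝ) 1

variable (K : Type) [RCLike K]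

/-- A net `(x_ε)_{ε ∈ (0,1)}` is moderate if `|x_ε| ≤ ε^a` for some `a ∈ ℝ`,
for all sufficiently small `ε`. -/
def IsModerate (x : Eps → K) : Prop :=
  ∃ a : ℝ, ∃ ε₀ ∈ Set.Ioo (0:ℝ) 1, ∀ ε : Eps, (ε : ℝ) ≤ ε₀ → ‖x ε‖ ≤ (ε : ℝ) ^ a

/-- A net `(x_ε)_{ε ∈ (0,1)}` is negligible if for every `a ∈ ℝ`, `|x_ε| ≤ ε^a`
for all sufficiently small `ε`. -/
def IsNegligible (x : Eps → K) : Prop :=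
  ∀ a : ℝ, ∃ ε₀ ∈ Set.Ioo (0:ℝ) 1, ∀ ε : Eps, (ε : ℝ) ≤ ε₀ → ‖x ε‖ ≤ (ε : ℝ) ^ a

theorem rpow_two_bound {ε : ℝ} (h0 : 0 < ε) (h2 : ε ≤ 1/2) (a b : ℝ) :
    ε ^ a + ε ^ b ≤ ε ^ (min a b - 1) := by
  have h1 : ε ≤ 1 := h2.trans (by norm_num)
  have ha : ε ^ a ≤ ε ^ min a b :=
    Real.rpow_le_rpow_of_exponent_ge h0 h1 (min_le_left a b)
  have hb : ε ^ b ≤ ε ^ min a b :=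
    Real.rpow_le_rpow_of_exponent_ge h0 h1 (min_le_right a b)
  have key : 2 * ε ^ min a b ≤ ε ^ (min a b - 1) := by
    rw [Real.rpow_sub h0, Real.rpow_one, le_div_iff₀ h0]
    have hx : (0:ℝ) ≤ ε ^ min a b := (Real.rpow_pos_of_pos h0 _).le
    calc 2 * ε ^ min a b * ε ≤ 2 * ε ^ min a b * (1/2) := by
          apply mul_le_mul_of_nonneg_left h2 (by positivity)
      _ = ε ^ min a b := by ring
  calc ε ^ a + ε ^ b ≤ 2 * ε ^ min a b := by linarith
    _ ≤ ε ^ (min a b - 1) := key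

/-- The ring of moderate nets, as a subring of `K^{(0,1)}`. -/
def Moderate : Subring (Eps → K) where
  carrier := {x | IsModerate K x}
  zero_mem' := by
    refine ⟨0, 1/2, by constructor <;> norm_num, fun ε _ => ?_⟩
    simp [Real.rpow_zero]
  one_mem' := by
    refine ⟨0, 1/2, by constructor <;> norm_num, fun ε _ => ?_⟩
    simp [Real.rpow_zero]
  add_mem' := by
    rintro x y ⟨a, ε₀, h₀, ha⟩ ⟨b, ε₁, h₁, hb⟩
    refine ⟨min a b - 1, min (min ε₀ ε₁) (1/2), ⟨lt_min (lt_min h₀.1 h₁.1) (by norm_num), ?_⟩,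
      fun ε hε => ?_⟩
    · calc min (min ε₀ ε₁) (1/2) ≤ 1/2 := min_le_right _ _
        _ < 1 := by norm_num
    · have hε₀ : (ε:ℝ) ≤ ε₀ := le_trans hε (le_trans (min_le_left _ _) (min_le_left _ _))
      have hε₁ : (ε:ℝ) ≤ ε₁ := le_trans hε (le_trans (min_le_left _ _) (min_le_right _ _))
      have hε2 : (ε:ℝ) ≤ 1/2 := le_trans hε (min_le_right _ _)
      calc ‖(x + y) ε‖ ≤ ‖x ε‖ + ‖y ε‖ := norm_add_le _ _
        _ ≤ (ε:ℝ) ^ a + (ε:ℝ) ^ b := add_le_add (ha ε hε₀) (hb ε hε₁)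
        _ ≤ (ε:ℝ) ^ (min a b - 1) := rpow_two_bound ε.2.1 hε2 a b
  neg_mem' := by
    rintro x ⟨a, ε₀, h₀, ha⟩
    exact ⟨a, ε₀, h₀, fun ε hε => by simpa using ha ε hε⟩
  mul_mem' := by
    rintro x y ⟨a, ε₀, h₀, ha⟩ ⟨b, ε₁, h₁, hb⟩
    refine ⟨a + b, min ε₀ ε₁, ⟨lt_min h₀.1 h₁.1, lt_of_le_of_lt (min_le_left _ _) h₀.2⟩,
      fun ε hε => ?_⟩
    have hε₀ : (ε:ℝ) ≤ ε₀ := le_trans hε (min_le_left _ _)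
    have hε₁ : (ε:ℝ) ≤ ε₁ := le_trans hε (min_le_right _ _)
    calc ‖(x * y) ε‖ = ‖x ε‖ * ‖y ε‖ := norm_mul _ _
      _ ≤ (ε:ℝ) ^ a * (ε:ℝ) ^ b :=
        mul_le_mul (ha ε hε₀) (hb ε hε₁) (norm_nonneg _) (Real.rpow_pos_of_pos ε.2.1 _).le
      _ = (ε:ℝ) ^ (a + b) := (Real.rpow_add ε.2.1 _ _).symm

theorem mem_moderate {f : Eps → K} (h : IsModerate K f) : f ∈ Moderate K := h

/-- The ideal of negligible nets in the ring of moderate nets. -/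
def Negligible : Ideal (Moderate K) where
  carrier := {x | IsNegligible K (x : Eps → K)}
  zero_mem' := by
    intro a
    refine ⟨1/2, by constructor <;> norm_num, fun ε _ => ?_⟩
    have : (0:ℝ) ≤ (ε:ℝ) ^ a := (Real.rpow_pos_of_pos ε.2.1 _).le
    simpa using this
  add_mem' := by
    intro x y hx hy a
    obtain ⟨ε₀, h₀, ha⟩ := hx (a + 1)
    obtain ⟨ε₁, h₁, hb⟩ := hy (a + 1)
    refine ⟨min (min ε₀ ε₁) (1/2), ⟨lt_min (lt_min h₀.1 h₁.1) (by norm_num), ?_⟩, fun ε hε => ?_⟩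
    · calc min (min ε₀ ε₁) (1/2) ≤ 1/2 := min_le_right _ _
        _ < 1 := by norm_num
    · have hε₀ : (ε:ℝ) ≤ ε₀ := le_trans hε (le_trans (min_le_left _ _) (min_le_left _ _))
      have hε₁ : (ε:ℝ) ≤ ε₁ := le_trans hε (le_trans (min_le_left _ _) (min_le_right _ _))
      have hε2 : (ε:ℝ) ≤ 1/2 := le_trans hε (min_le_right _ _)
      have hbd := rpow_two_bound (ε := (ε:ℝ)) ε.2.1 hε2 (a+1) (a+1)
      simp only [min_self, add_sub_cancel_right] at hbd
      calc ‖((x + y : Moderate K) : Eps → K) ε‖ ≤ ‖(x : Eps → K) ε‖ + ‖(y : Eps → K) ε‖ := by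
            push_cast
            exact norm_add_le _ _
        _ ≤ (ε:ℝ) ^ (a+1) + (ε:ℝ) ^ (a+1) := add_le_add (ha ε hε₀) (hb ε hε₁)
        _ ≤ (ε:ℝ) ^ a := hbd
  smul_mem' := by
    intro c x hx
    show IsNegligible K ((c * x : Moderate K) : Eps → K)
    intro a
    obtain ⟨b, ε₀, h₀, hc⟩ := c.property
    obtain ⟨ε₁, h₁, hxa⟩ := hx (a - b)
    refine ⟨min ε₀ ε₁, ⟨lt_min h₀.1 h₁.1, lt_of_le_of_lt (min_le_left _ _) h₀.2⟩,
      fun ε hε => ?_⟩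
    have hε₀ : (ε:ℝ) ≤ ε₀ := le_trans hε (min_le_left _ _)
    have hε₁ : (ε:ℝ) ≤ ε₁ := le_trans hε (min_le_right _ _)
    calc ‖((c * x : Moderate K) : Eps → K) ε‖ = ‖(c : Eps → K) ε‖ * ‖(x : Eps → K) ε‖ := by
          push_cast
          exact norm_mul _ _
      _ ≤ (ε:ℝ) ^ b * (ε:ℝ) ^ (a - b) :=
        mul_le_mul (hc ε hε₀) (hxa ε hε₁) (norm_nonneg _) (Real.rpow_pos_of_pos ε.2.1 _).le
      _ = (ε:ℝ) ^ a := by rw [← Real.rpow_add ε.2.1]; ring_nf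

/-- The ring of Colombeau generalized numbers: the quotient of the ring of
moderate nets by the ideal of negligible nets. -/
abbrev CGen : Type := Moderate K ⧸ Negligible K

/-- The quotient map. -/
abbrev cmk : Moderate K →+* CGen K := Ideal.Quotient.mk (Negligible K)

/-- A canonical representative of a Colombeau generalized number. -/
def rep (x : CGen K) : Moderate K := (Ideal.Quotient.mk_surjective x).choose

theorem rep_spec (x : CGen K) : cmk K (rep K x) = x :=
  (Ideal.Quotient.mk_surjective x).choose_spec

theorem indicator_moderate (S : Set Eps) :
    IsModerate K (fun ε => if ε ∈ S then (1:K) else 0) := by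
  refine ⟨0, 1/2, by constructor <;> norm_num, fun ε _ => ?_⟩
  rw [Real.rpow_zero]
  by_cases h : ε ∈ S <;> simp [h]

/-- `e_S`: the generalized number given by the characteristic function of `S ⊆ (0,1)`. -/
def eS (S : Set Eps) : CGen K :=
  cmk K ⟨fun ε => if ε ∈ S then (1:K) else 0, mem_moderate K (indicator_moderate K S)⟩

theorem absNet_moderate (f : Moderate K) :
    IsModerate K (fun ε => ((‖(f : Eps → K) ε‖ : ℝ) : K)) := by
  obtain ⟨a, ε₀, h₀, h⟩ := f.property
  refine ⟨a, ε₀, h₀, fun ε hε => ?_⟩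
  simpa [RCLike.norm_ofReal, abs_norm] using h ε hε

/-- `|x|`: the class of the net `(|x_ε|)_ε` (for any representative of `x`). -/
def absC (x : CGen K) : CGen K :=
  cmk K ⟨_, mem_moderate K (absNet_moderate K (rep K x))⟩

theorem minNet_moderate (f g : Moderate K) :
    IsModerate K (fun ε => ((min ‖(f : Eps → K) ε‖ ‖(g : Eps → K) ε‖ : ℝ) : K)) := by
  obtain ⟨a, ε₀, h₀, h⟩ := f.property
  refine ⟨a, ε₀, h₀, fun ε hε => ?_⟩
  rw [RCLike.norm_ofReal, abs_of_nonneg (le_min (norm_nonneg _) (norm_nonneg _))]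
  exact le_trans (min_le_left _ _) (h ε hε)

/-- `|x| ∧ |y|`: the class of the pointwise minimum of `(|x_ε|)_ε` and `(|y_ε|)_ε`. -/
def infAbs (x y : CGen K) : CGen K :=
  cmk K ⟨_, mem_moderate K (minNet_moderate K (rep K x) (rep K y))⟩

theorem sqrtNet_moderate (f : Moderate K) :
    IsModerate K (fun ε => ((Real.sqrt ‖(f : Eps → K) ε‖ : ℝ) : K)) := by
  obtain ⟨a, ε₀, h₀, h⟩ := f.property
  refine ⟨a / 2, ε₀, h₀, fun ε hε => ?_⟩
  rw [RCLike.norm_ofReal, abs_of_nonneg (Real.sqrt_nonneg _)]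
  calc Real.sqrt ‖(f : Eps → K) ε‖ ≤ Real.sqrt ((ε:ℝ) ^ a) := Real.sqrt_le_sqrt (h ε hε)
    _ = (ε:ℝ) ^ (a / 2) := by
        rw [Real.sqrt_eq_rpow, ← Real.rpow_mul ε.2.1.le]
        ring_nf

/-- `√|x|`: the class of the net `(√|x_ε|)_ε` (for any representative of `x`). -/
def sqrtAbs (x : CGen K) : CGen K :=
  cmk K ⟨_, mem_moderate K (sqrtNet_moderate K (rep K x))⟩

/-- The annihilator `Ann(a) = {x : x·a = 0}` as an ideal. -/
def annIdeal (a : CGen K) : Ideal (CGen K) where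
  carrier := {x | x * a = 0}
  zero_mem' := by simp
  add_mem' := by
    intro x y hx hy
    show (x + y) * a = 0
    rw [add_mul, hx, hy, add_zero]
  smul_mem' := by
    intro c x hx
    show c * x * a = 0
    rw [mul_assoc, hx, mul_zero]

/-- The order relation on `𝕂̃`: `x ≤ y` iff there exist (real-valued) representatives
`(u_ε)_ε` of `x` and `(v_ε)_ε` of `y` with `u_ε ≤ v_ε` for all `ε`. -/
def leC (x y : CGen K) : Prop :=
  ∃ u v : Moderate K, cmk K u = x ∧ cmk K v = y ∧
    ∀ ε : Eps, ∃ r s : ℝ, (u : Eps → K) ε = (r : K) ∧ (v : Eps → K) ε = (s : K) ∧ r ≤ s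

/-- A z-ideal: if `b ∈ I` and `a` belongs to exactly the same maximal ideals as `b`,
then `a ∈ I`. -/
def IsZIdeal (I : Ideal (CGen K)) : Prop :=
  ∀ a b : CGen K, b ∈ I →
    (∀ M : Ideal (CGen K), M.IsMaximal → (a ∈ M ↔ b ∈ M)) → a ∈ I



/-- The indicator net as an element of the ring of moderate nets. -/
def indMod (S : Set Eps) : Moderate K :=
  ⟨fun ε => if ε ∈ S then (1:K) else 0, mem_moderate K (indicator_moderate K S)⟩

theorem eS_eq (S : Set Eps) : eS K S = cmk K (indMod K S) := rfl

theorem indMod_coe (S : Set Eps) :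
    ((indMod K S : Moderate K) : Eps → K) = fun ε => if ε ∈ S then (1:K) else 0 := rfl

theorem indMod_mul_self (S : Set Eps) : indMod K S * indMod K S = indMod K S := by
  apply Subtype.ext
  simp only [Subring.coe_mul, indMod_coe]
  funext ε
  by_cases h : ε ∈ S <;> simp [h]

theorem indMod_mul_compl (S : Set Eps) : indMod K S * indMod K Sᶜ = 0 := by
  apply Subtype.ext
  simp only [Subring.coe_mul, ZeroMemClass.coe_zero, indMod_coe]
  funext ε
  by_cases h : ε ∈ S <;> simp [h]

theorem indMod_add_compl (S : Set Eps) : indMod K S + indMod K Sᶜ = 1 := by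
  apply Subtype.ext
  simp only [Subring.coe_add, OneMemClass.coe_one, indMod_coe]
  funext ε
  by_cases h : ε ∈ S <;> simp [h]

theorem eS_mul_self (S : Set Eps) : eS K S * eS K S = eS K S := by
  rw [eS_eq, ← map_mul, indMod_mul_self]

theorem eS_mul_compl (S : Set Eps) : eS K S * eS K Sᶜ = 0 := by
  rw [eS_eq, eS_eq, ← map_mul, indMod_mul_compl, map_zero]

theorem eS_add_compl (S : Set Eps) : eS K S + eS K Sᶜ = 1 := by
  rw [eS_eq, eS_eq, ← map_add, indMod_add_compl, map_one]

theorem decompC (x : CGen K) (S : Set Eps) :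
    x = x * eS K S + x * eS K Sᶜ := by
  rw [← mul_add, eS_add_compl, mul_one]

theorem quotientNet_moderate (u v : Moderate K) (S : Set Eps)
    (hS : ∀ ε ∈ S, ‖(u : Eps → K) ε‖ ≤ ‖(v : Eps → K) ε‖) :
    IsModerate K (fun ε => if ε ∈ S then (u : Eps → K) ε / (v : Eps → K) ε else 0) := by
  refine ⟨0, 1/2, by constructor <;> norm_num, fun ε _ => ?_⟩
  rw [Real.rpow_zero]
  by_cases h : ε ∈ S
  · simp only [h, if_true, norm_div]
    by_cases hv : (v : Eps → K) ε = 0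
    · simp [hv]
    · rw [div_le_one (norm_pos_iff.2 hv)]; exact hS ε h
  · simp [h]

/-- Key division lemma: if `‖u_ε‖ ≤ ‖v_ε‖` on `S`, then `[u]·e_S ∈ ([v])`. -/
theorem key_div (u v : Moderate K) (S : Set Eps)
    (hS : ∀ ε ∈ S, ‖(u : Eps → K) ε‖ ≤ ‖(v : Eps → K) ε‖) :
    cmk K u * eS K S ∈ Ideal.span {cmk K v} := by
  rw [Ideal.mem_span_singleton']
  refine ⟨cmk K ⟨_, mem_moderate K (quotientNet_moderate K u v S hS)⟩, ?_⟩
  rw [eS_eq, ← map_mul, ← map_mul]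
  congr 1
  apply Subtype.ext; funext ε
  show (if ε ∈ S then (u : Eps → K) ε / (v : Eps → K) ε else 0) * (v : Eps → K) ε
      = (u : Eps → K) ε * (if ε ∈ S then (1:K) else 0)
  by_cases h : ε ∈ S
  · simp only [h, if_true, mul_one]
    by_cases hv : (v : Eps → K) ε = 0
    · have hu : (u : Eps → K) ε = 0 := norm_le_zero_iff.1 (by simpa [hv] using hS ε h)
      simp [hu, hv]
    · field_simp
  · simp [h]

/-- Key negligibility lemma: if `u·v` is negligible and `‖u_ε‖ ≤ ‖v_ε‖` on `S`,
then `[u]·e_S = 0`. -/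
theorem key_neg (u v : Moderate K) (huv : u * v ∈ Negligible K) (S : Set Eps)
    (hS : ∀ ε ∈ S, ‖(u : Eps → K) ε‖ ≤ ‖(v : Eps → K) ε‖) :
    cmk K u * eS K S = 0 := by
  rw [eS_eq, ← map_mul, Ideal.Quotient.eq_zero_iff_mem]
  show IsNegligible K ((u * indMod K S : Moderate K) : Eps → K)
  intro a
  obtain ⟨ε₀, h₀, hn⟩ := huv (2*a)
  refine ⟨ε₀, h₀, fun ε hε => ?_⟩
  have hpos : (0:ℝ) < (ε:ℝ) ^ a := Real.rpow_pos_of_pos ε.2.1 _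
  have hcoe : ((u * indMod K S : Moderate K) : Eps → K) ε
      = (u : Eps → K) ε * (if ε ∈ S then (1:K) else 0) := rfl
  by_cases h : ε ∈ S
  · rw [hcoe]; simp only [h, if_true, mul_one]
    have h1 : ‖(u : Eps → K) ε‖ * ‖(u : Eps → K) ε‖ ≤ (ε:ℝ) ^ a * ((ε:ℝ) ^ a) := by
      calc ‖(u : Eps → K) ε‖ * ‖(u : Eps → K) ε‖
          ≤ ‖(u : Eps → K) ε‖ * ‖(v : Eps → K) ε‖ :=
            mul_le_mul_of_nonneg_left (hS ε h) (norm_nonneg _)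
        _ = ‖((u * v : Moderate K) : Eps → K) ε‖ := by rw [← norm_mul]; rfl
        _ ≤ (ε:ℝ) ^ (2*a) := hn ε hε
        _ = (ε:ℝ) ^ a * ((ε:ℝ) ^ a) := by
            rw [← Real.rpow_add ε.2.1]; ring_nf
    nlinarith [norm_nonneg ((u : Eps → K) ε)]
  · rw [hcoe]; simp only [h, if_false, mul_zero, norm_zero]
    exact hpos.le

theorem pow_idem {R : Type*} [Monoid R] (e : R) (he : e * e = e) (n : ℕ) :
    e ^ (n + 1) = e := by
  induction n with
  | zero => simp
  | succ n ih => rw [pow_succ, ih, he]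

/-- for a proper ideal `I` of `𝕂̃`, TFAE: `I` is pseudoprime; the
ideals containing `I` are totally ordered by inclusion; `I` is irreducible;
for every `S ⊆ (0,1)`, `e_S ∈ I` or `e_{∁S} ∈ I`; the radical of `I` is prime. -/
theorem stmt4 (I : Ideal (CGen K)) (hI : I ≠ ⊤) :
    List.TFAE [∀ a b : CGen K, a * b = 0 → a ∈ I ∨ b ∈ I,
      ∀ J J' : Ideal (CGen K), I ≤ J → I ≤ J' → J ≤ J' ∨ J' ≤ J,
      ∀ J J' : Ideal (CGen K), I = J ⊓ J' → I = J ∨ I = J',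
      ∀ S : Set Eps, eS K S ∈ I ∨ eS K Sᶜ ∈ I,
      I.radical.IsPrime] := by
  have hdecomp := decompC K
  have key2 : ∀ S : Set Eps, ∀ z : CGen K,
      z ∈ Ideal.span {eS K S} ⊔ I → z * eS K Sᶜ ∈ I := by
    intro S z hz
    obtain ⟨a, i, hi, hz⟩ := Ideal.mem_span_singleton_sup.1 hz
    have : z * eS K Sᶜ = i * eS K Sᶜ := by
      rw [← hz, add_mul, mul_assoc, eS_mul_compl, mul_zero, zero_add]
    rw [this]
    exact I.mul_mem_right _ hi
  tfae_have 1 → 4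
  | h1, S => h1 _ _ (eS_mul_compl K S)
  tfae_have 4 → 1
  | h4, a, b, hab => by
    set u := rep K a with hu
    set v := rep K b with hv
    have huv : u * v ∈ Negligible K := by
      rw [← Ideal.Quotient.eq_zero_iff_mem]
      show cmk K (u * v) = 0
      rw [map_mul, rep_spec, rep_spec, hab]
    set S : Set Eps := {ε | ‖(u : Eps → K) ε‖ ≤ ‖(v : Eps → K) ε‖} with hSdef
    have hxS : a * eS K S = 0 := by
      conv_lhs => rw [← rep_spec K a]
      exact key_neg K u v huv S (fun ε hε => hε)
    have hySc : b * eS K Sᶜ = 0 := by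
      conv_lhs => rw [← rep_spec K b]
      exact key_neg K v u (by rwa [mul_comm]) Sᶜ (fun ε hε => le_of_not_ge (by exact hε))
    rcases h4 S with h | h
    · right
      rw [hdecomp b S, hySc, add_zero]
      exact I.mul_mem_left b h
    · left
      rw [hdecomp a S, hxS, zero_add]
      exact I.mul_mem_left a h
  tfae_have 4 → 2
  | h4, J, J', hJ, hJ' => by
    by_cases hsub : J ≤ J'
    · exact Or.inl hsub
    · right
      obtain ⟨x, hxJ, hxJ'⟩ := SetLike.not_le_iff_exists.1 hsub
      intro y hy
      set u := rep K x with hu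
      set v := rep K y with hv
      set S : Set Eps := {ε | ‖(u : Eps → K) ε‖ ≤ ‖(v : Eps → K) ε‖} with hSdef
      have h1 : x * eS K S ∈ J' := by
        have hk := key_div K u v S (fun ε hε => hε)
        rw [rep_spec, rep_spec] at hk
        exact (Ideal.span_singleton_le_iff_mem J').2 hy hk
      have heS : eS K S ∈ I := by
        rcases h4 S with h | h
        · exact h
        · exact absurd (by
            rw [hdecomp x S]
            exact J'.add_mem h1 (J'.mul_mem_left x (hJ' h))) hxJ'
      have h2 : y * eS K Sᶜ ∈ J := by
        have hk := key_div K v u Sᶜ (fun ε hε => le_of_not_ge (by exact hε))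
        rw [rep_spec, rep_spec] at hk
        exact (Ideal.span_singleton_le_iff_mem J).2 hxJ hk
      rw [hdecomp y S]
      exact J.add_mem (J.mul_mem_left y (hJ heS)) h2
  tfae_have 2 → 3
  | h2, J, J', hinf => by
    rcases h2 J J' (hinf ▸ inf_le_left) (hinf ▸ inf_le_right) with h | h
    · left; rw [hinf, inf_eq_left.2 h]
    · right; rw [hinf, inf_eq_right.2 h]
  tfae_have 3 → 4
  | h3, S => by
    set J : Ideal (CGen K) := Ideal.span {eS K S} ⊔ I with hJdef
    set J' : Ideal (CGen K) := Ideal.span {eS K Sᶜ} ⊔ I with hJ'def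
    have hinf : I = J ⊓ J' := by
      apply le_antisymm
      · exact le_inf le_sup_right le_sup_right
      · intro z hz
        obtain ⟨hzJ, hzJ'⟩ := Ideal.mem_inf.1 hz
        have h1 : z * eS K Sᶜ ∈ I := key2 S z hzJ
        have h2 : z * eS K S ∈ I := by
          have := key2 Sᶜ z (by rwa [← hJ'def])
          rwa [compl_compl] at this
        rw [hdecomp z S]
        exact I.add_mem h2 h1
    rcases h3 J J' hinf with h | h
    · left
      rw [h]
      exact Ideal.mem_sup_left (Ideal.mem_span_singleton_self _)
    · right
      rw [h]
      exact Ideal.mem_sup_left (Ideal.mem_span_singleton_self _)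
  tfae_have 4 → 5
  | h4 => by
    obtain ⟨M, hM, hIM⟩ := Ideal.exists_le_maximal I hI
    have hradM : I.radical ≤ M := (hM.isPrime.radical_le_iff).2 hIM
    constructor
    · intro htop
      exact hM.ne_top (top_le_iff.1 (htop ▸ hradM))
    · intro x y hxy
      set u := rep K x with hu
      set v := rep K y with hv
      set S : Set Eps := {ε | ‖(u : Eps → K) ε‖ ≤ ‖(v : Eps → K) ε‖} with hSdef
      have hprod : ∀ (p q : Moderate K) (ε : Eps),
          ‖((p * q : Moderate K) : Eps → K) ε‖ = ‖(p : Eps → K) ε‖ * ‖(q : Eps → K) ε‖ := by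
        intro p q ε; rw [← norm_mul]; rfl
      rcases h4 S with h | h
      · -- e_S ∈ I : show y ∈ radical
        right
        have hk := key_div K (v * v) (v * u) Sᶜ (fun ε hε => by
          rw [hprod, hprod]
          exact mul_le_mul_of_nonneg_left (le_of_not_ge (by exact hε)) (norm_nonneg _))
        rw [map_mul, map_mul, rep_spec, rep_spec] at hk
        have hyx : y * x ∈ I.radical := by rwa [mul_comm]
        have hy2 : y * y * eS K Sᶜ ∈ I.radical :=
          (Ideal.span_singleton_le_iff_mem _).2 hyx hk
        have hsq : (y * eS K Sᶜ) ^ 2 ∈ I.radical := by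
          have : (y * eS K Sᶜ) ^ 2 = y * y * eS K Sᶜ * eS K Sᶜ := by ring
          rw [this, mul_assoc, eS_mul_self]
          exact hy2
        have hyc : y * eS K Sᶜ ∈ I.radical := Ideal.mem_radical_of_pow_mem hsq
        rw [hdecomp y S]
        exact I.radical.add_mem (Ideal.le_radical (I.mul_mem_left y h)) hyc
      · -- e_{Sᶜ} ∈ I : show x ∈ radical
        left
        have hk := key_div K (u * u) (u * v) S (fun ε hε => by
          rw [hprod, hprod]
          exact mul_le_mul_of_nonneg_left hε (norm_nonneg _))
        rw [map_mul, map_mul, rep_spec, rep_spec] at hk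
        have hx2 : x * x * eS K S ∈ I.radical :=
          (Ideal.span_singleton_le_iff_mem _).2 hxy hk
        have hsq : (x * eS K S) ^ 2 ∈ I.radical := by
          have : (x * eS K S) ^ 2 = x * x * eS K S * eS K S := by ring
          rw [this, mul_assoc, eS_mul_self]
          exact hx2
        have hxS : x * eS K S ∈ I.radical := Ideal.mem_radical_of_pow_mem hsq
        rw [hdecomp x S]
        exact I.radical.add_mem hxS (Ideal.le_radical (I.mul_mem_left x h))
  tfae_have 5 → 4
  | h5, S => by
    have hidem : ∀ T : Set Eps, eS K T ∈ I.radical → eS K T ∈ I := by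
      intro T hT
      obtain ⟨n, hn⟩ := hT
      match n with
      | 0 =>
        rw [pow_zero] at hn
        exact absurd (Ideal.eq_top_iff_one I |>.2 hn) hI
      | n + 1 =>
        rwa [pow_idem _ (eS_mul_self K T) n] at hn
    have h0 : eS K S * eS K Sᶜ ∈ I.radical := by
      rw [eS_mul_compl]; exact zero_mem _
    rcases h5.mem_or_mem h0 with h | h
    · exact Or.inl (hidem S h)
    · exact Or.inr (hidem Sᶜ h)
  tfae_finish



end
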